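/- Let v, w ∈ ℝ³ satisfy ‖v‖ = ‖w‖ = 1 and ⟨v,w⟩ = 0, let B be a skew-symmetric real 3×3 matrix with B·v = 0, and let A = [[B, w],[wᵀ, 0]] be the associated real 4×4 block matrix. Let v̄ = (v₁, v₂, v₃, 0) ∈ ℝ⁴ and e₄ = (0,0,0,1). Define f : ℝ² → ℝ⁴ by f(t,s) = exp(tA) · (sinh(s)·v̄ + cosh(s)·e₄). Then for all (t,s) ∈ ℝ², ⟨f(t,s), f(t,s)⟩_L = −1 and the fourth coordinate of f(t,s) is positive; that is, f takes values in the hyperboloid model ℍ³ = { x ∈ ℝ⁴ : ⟨x,x⟩_L = −1, x₄ > 0 } of hyperbolic 3-space. -/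

import Mathlib

open Matrix RealInnerProductSpace

noncomputable section

/-- The Lorentz inner product `⟨x,y⟩_L = x₁y₁ + x₂y₂ + x₃y₃ − x₄y₄` on `ℝ⁴`. -/
def lorentz (x y : Fin 4 → ℝ) : ℝ :=
  x 0 * y 0 + x 1 * y 1 + x 2 * y 2 - x 3 * y 3

/-- The Lorentz signature matrix `J = diag(1,1,1,−1)`. -/
def lorentzJ : Matrix (Fin 4) (Fin 4) ℝ :=
  Matrix.diagonal ![1, 1, 1, -1]

/-- The block matrix `A = [[B, w], [wᵀ, 0]]`: upper-left `3×3` block `B`, last column the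
entries of `w` in the first three rows and `0` in the last, last row the entries of `w`
in the first three columns and `0` in the last. -/
def blockA (B : Matrix (Fin 3) (Fin 3) ℝ) (w : Fin 3 → ℝ) : Matrix (Fin 4) (Fin 4) ℝ :=
  fun i j =>
    if hi : (i : ℕ) < 3 then
      if hj : (j : ℕ) < 3 then B ⟨i, hi⟩ ⟨j, hj⟩ else w ⟨i, hi⟩
    else
      if hj : (j : ℕ) < 3 then w ⟨j, hj⟩ else 0

/-- The inclusion of `ℝ³` into `ℝ⁴` as the vectors with vanishing fourth coordinate. -/
def extend3 (v : Fin 3 → ℝ) : Fin 4 → ℝ :=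
  fun i => if h : (i : ℕ) < 3 then v ⟨i, h⟩ else 0

/-- The fourth canonical basis vector `e₄ = (0,0,0,1)` of `ℝ⁴`. -/
def e4 : Fin 4 → ℝ := fun i => if i = 3 then 1 else 0

/-- `J² = 1`. -/
lemma lorentzJ_mul_self : lorentzJ * lorentzJ = 1 := by
  ext i j
  fin_cases i <;> fin_cases j <;>
    simp [lorentzJ, Matrix.mul_apply, Fin.sum_univ_four, Matrix.diagonal, Matrix.one_apply]

set_option maxRecDepth 10000 in
/-- The block matrix `A` is skew-adjoint for the Lorentz form: `J A J = −Aᵀ`. -/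
lemma lorentzJ_conj_blockA (B : Matrix (Fin 3) (Fin 3) ℝ) (w : Fin 3 → ℝ) (hB : Bᵀ = -B) :
    lorentzJ * blockA B w * lorentzJ = -(blockA B w)ᵀ := by
  have hB' : ∀ i j, B j i = -B i j := by
    intro i j
    have := congrFun (congrFun hB i) j
    simpa [Matrix.transpose_apply] using this
  ext i j
  fin_cases i <;> fin_cases j <;>
    simp [lorentzJ, blockA, Matrix.mul_apply, Fin.sum_univ_four, Matrix.diagonal,
      Matrix.transpose_apply, show ((3:Fin 4):ℕ) = 3 from rfl] <;> try exact hB' _ _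

/-- `exp(tA)` preserves the Lorentz form whenever `J A J = −Aᵀ`. -/
lemma exp_preserves_lorentzJ (A : Matrix (Fin 4) (Fin 4) ℝ)
    (hskew : lorentzJ * A * lorentzJ = -Aᵀ) (t : ℝ) :
    (NormedSpace.exp (t • A))ᵀ * lorentzJ * (NormedSpace.exp (t • A)) = lorentzJ := by
  have hJJ := lorentzJ_mul_self
  have hJunit : IsUnit lorentzJ := (Matrix.isUnit_iff_isUnit_det _).mpr (Matrix.isUnit_det_of_right_inverse hJJ)
  have hJinv : lorentzJ⁻¹ = lorentzJ := Matrix.inv_eq_right_inv hJJ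
  set E := NormedSpace.exp (t • A) with hE
  have h1 : Eᵀ = NormedSpace.exp (t • Aᵀ) := by
    rw [hE, ← Matrix.exp_transpose, Matrix.transpose_smul]
  have h2 : lorentzJ * E * lorentzJ = NormedSpace.exp (-(t • Aᵀ)) := by
    have := Matrix.exp_conj lorentzJ (t • A) hJunit
    rw [hJinv] at this
    rw [← this]
    congr 1
    rw [Matrix.mul_smul, Matrix.smul_mul, hskew, smul_neg, ← Matrix.transpose_smul]
  have h3 : NormedSpace.exp (t • Aᵀ) * NormedSpace.exp (-(t • Aᵀ)) = 1 := by
    rw [← Matrix.exp_add_of_commute (t • Aᵀ) (-(t • Aᵀ)) ((Commute.refl _).neg_right),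
      add_neg_cancel, NormedSpace.exp_zero]
  calc Eᵀ * lorentzJ * E = Eᵀ * (lorentzJ * E * lorentzJ) * lorentzJ := by
        rw [mul_assoc, mul_assoc, mul_assoc, hJJ, mul_one]
    _ = lorentzJ := by rw [h2, h1, h3, one_mul]

/-- The Lorentz form as a matrix bilinear form. -/
lemma lorentz_eq_dot (x y : Fin 4 → ℝ) : lorentz x y = x ⬝ᵥ lorentzJ.mulVec y := by
  simp [lorentz, lorentzJ, Matrix.mulVec, dotProduct, Fin.sum_univ_four,
    Matrix.diagonal]
  ring

/-- A matrix satisfying `Mᵀ J M = J` preserves the Lorentz form. -/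
lemma lorentz_mulVec (M : Matrix (Fin 4) (Fin 4) ℝ) (hM : Mᵀ * lorentzJ * M = lorentzJ)
    (x y : Fin 4 → ℝ) : lorentz (M.mulVec x) (M.mulVec y) = lorentz x y := by
  rw [lorentz_eq_dot, lorentz_eq_dot, Matrix.mulVec_mulVec, ← Matrix.vecMul_transpose,
    Matrix.dotProduct_mulVec, Matrix.vecMul_vecMul, ← Matrix.dotProduct_mulVec,
    ← Matrix.mul_assoc, hM]

/-- The map `f(t,s) = exp(tA) · (sinh(s)·v̄ + cosh(s)·e₄)` built from orthonormal
`v, w ∈ ℝ³` and a skew-symmetric `B` with `B·v = 0` takes values in the hyperboloid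
model `ℍ³ = { x ∈ ℝ⁴ : ⟨x,x⟩_L = −1, x₄ > 0 }`. -/
theorem f_mem_hyperboloid
    (v w : EuclideanSpace ℝ (Fin 3)) (hv : ‖v‖ = 1) (hw : ‖w‖ = 1) (hvw : ⟪v, w⟫ = 0)
    (B : Matrix (Fin 3) (Fin 3) ℝ) (hB : Bᵀ = -B) (hBv : B.mulVec v = 0)
    (f : ℝ × ℝ → (Fin 4 → ℝ))
    (hf : ∀ p : ℝ × ℝ, f p = (NormedSpace.exp (p.1 • blockA B w)).mulVec
      (Real.sinh p.2 • extend3 v + Real.cosh p.2 • e4)) :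
    ∀ p : ℝ × ℝ, lorentz (f p) (f p) = -1 ∧ 0 < f p 3 := by
  have hv2 : v 0 ^ 2 + v 1 ^ 2 + v 2 ^ 2 = 1 := by
    have h := real_inner_self_eq_norm_sq v
    rw [hv] at h
    simp only [PiLp.inner_apply, RCLike.inner_apply, conj_trivial, Fin.sum_univ_three] at h
    nlinarith [h]
  -- Lorentz norm of the initial geodesic
  have hcurve : ∀ s : ℝ,
      lorentz (Real.sinh s • extend3 v + Real.cosh s • e4)
        (Real.sinh s • extend3 v + Real.cosh s • e4) = -1 := by
    intro s
    have hc := Real.cosh_sq s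
    have h0 : (Real.sinh s • extend3 v + Real.cosh s • e4) 0 = Real.sinh s * v 0 := by
      simp [extend3, e4]
    have h1 : (Real.sinh s • extend3 v + Real.cosh s • e4) 1 = Real.sinh s * v 1 := by
      simp [extend3, e4]
    have h2 : (Real.sinh s • extend3 v + Real.cosh s • e4) 2 = Real.sinh s * v 2 := by
      simp [extend3, e4]
    have h3 : (Real.sinh s • extend3 v + Real.cosh s • e4) 3 = Real.cosh s := by
      simp [extend3, e4, show ((3:Fin 4):ℕ) = 3 from rfl]
    rw [lorentz, h0, h1, h2, h3]
    nlinarith [hv2, hc]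
  have hlor : ∀ p : ℝ × ℝ, lorentz (f p) (f p) = -1 := by
    intro p
    rw [hf p,
      lorentz_mulVec _ (exp_preserves_lorentzJ _ (lorentzJ_conj_blockA B w hB) p.1), hcurve]
  -- the fourth coordinate is never zero
  have hne : ∀ p : ℝ × ℝ, f p 3 ≠ 0 := by
    intro p h0
    have h := hlor p
    simp only [lorentz, h0] at h
    nlinarith [sq_nonneg (f p 0), sq_nonneg (f p 1), sq_nonneg (f p 2), h]
  -- the fourth coordinate is a continuous function of `p`
  have hcont : Continuous fun p : ℝ × ℝ => f p 3 := by
    letI : SeminormedRing (Matrix (Fin 4) (Fin 4) ℝ) := Matrix.linftyOpSemiNormedRing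
    letI : NormedRing (Matrix (Fin 4) (Fin 4) ℝ) := Matrix.linftyOpNormedRing
    letI : NormedAlgebra ℝ (Matrix (Fin 4) (Fin 4) ℝ) := Matrix.linftyOpNormedAlgebra
    letI : NormedAlgebra ℚ (Matrix (Fin 4) (Fin 4) ℝ) :=
      NormedAlgebra.restrictScalars ℚ ℝ (Matrix (Fin 4) (Fin 4) ℝ)
    have heq : (fun p : ℝ × ℝ => f p 3) = fun p : ℝ × ℝ =>
        ∑ j : Fin 4, (NormedSpace.exp (p.1 • blockA B w)) 3 j *
          (Real.sinh p.2 • extend3 v + Real.cosh p.2 • e4) j := by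
      funext p
      rw [hf p]
      rfl
    rw [heq]
    refine continuous_finset_sum _ fun j _ => Continuous.mul ?_ ?_
    · have hexp : Continuous fun p : ℝ × ℝ => NormedSpace.exp (p.1 • blockA B w) :=
        (NormedSpace.exp_continuous (𝔸 := Matrix (Fin 4) (Fin 4) ℝ)).comp
          (continuous_fst.smul continuous_const)
      exact (continuous_apply j).comp ((continuous_apply (3 : Fin 4)).comp hexp)
    · show Continuous fun p : ℝ × ℝ => Real.sinh p.2 * extend3 v j + Real.cosh p.2 * e4 j
      fun_prop
  -- value at the base point
  have hval : f (0, 0) 3 = 1 := by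
    rw [hf (0, 0)]
    simp [NormedSpace.exp_zero, Matrix.one_mulVec, e4, extend3]
  intro p
  refine ⟨hlor p, ?_⟩
  by_contra hle
  push_neg at hle
  obtain ⟨q, hq⟩ := intermediate_value_univ₂ (a := p) (b := ((0, 0) : ℝ × ℝ))
    hcont continuous_const hle (by rw [hval]; norm_num : (0:ℝ) ≤ f (0, 0) 3)
  exact hne q hq
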